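/- Let 0 ≤ γ₁ ≤ γ₂ ≤ 1 and ξ ∈ [0, 1]. Then H₂((1-γ₂)·ξ) - H₂(γ₂·ξ) ≤ H₂((1-γ₁)·ξ) - H₂(γ₁·ξ); that is, for each fixed input parameter ξ the coherent-information integrand of the amplitude damping channel is a nonincreasing function of the damping parameter γ. -/

import Mathlib

/-- The binary entropy `H₂(x) = -x·log₂ x - (1-x)·log₂(1-x)` (with the conventions
`H₂(0) = H₂(1) = 0`, automatic since `Real.logb 2 0 = 0`). -/
noncomputable def binEnt (x : ℝ) : ℝ :=
  -(x * Real.logb 2 x) - (1 - x) * Real.logb 2 (1 - x)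

lemma binEnt_eq (x : ℝ) : binEnt x = Real.binEntropy x / Real.log 2 := by
  simp [binEnt, Real.binEntropy, Real.logb, Real.log_inv]
  ring

lemma key_antitone (ξ : ℝ) (hξ0 : 0 ≤ ξ) (hξ1 : ξ ≤ 1) :
    AntitoneOn (fun γ => Real.binEntropy ((1 - γ) * ξ) - Real.binEntropy (γ * ξ))
      (Set.Icc (0:ℝ) 1) := by
  rcases eq_or_lt_of_le hξ0 with h0 | h0
  · intro a _ b _ _
    simp [← h0]
  have deriv_setup : ∀ γ : ℝ, γ ∈ Set.Ioo (0:ℝ) 1 →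
      HasDerivAt (fun γ => Real.binEntropy ((1 - γ) * ξ) - Real.binEntropy (γ * ξ))
        ((Real.log (1 - (1 - γ) * ξ) - Real.log ((1 - γ) * ξ)) * (-ξ) -
          (Real.log (1 - γ * ξ) - Real.log (γ * ξ)) * ξ) γ := by
    intro γ hγ
    obtain ⟨hγ0, hγ1⟩ := hγ
    have ha0 : 0 < (1 - γ) * ξ := mul_pos (by linarith) h0
    have hb0 : 0 < γ * ξ := mul_pos hγ0 h0
    have ha1 : (1 - γ) * ξ < 1 := by nlinarith
    have hb1 : γ * ξ < 1 := by nlinarith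
    have d1 : HasDerivAt (fun γ : ℝ => Real.binEntropy ((1 - γ) * ξ))
        ((Real.log (1 - (1 - γ) * ξ) - Real.log ((1 - γ) * ξ)) * (-ξ)) γ := by
      have := (Real.hasDerivAt_binEntropy ha0.ne' (by linarith)).comp γ
        (((hasDerivAt_id γ).const_sub 1).mul_const ξ)
      simpa [Function.comp_def] using this
    have d2 : HasDerivAt (fun γ : ℝ => Real.binEntropy (γ * ξ))
        ((Real.log (1 - γ * ξ) - Real.log (γ * ξ)) * ξ) γ := by
      have := (Real.hasDerivAt_binEntropy hb0.ne' (by linarith)).comp γ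
        ((hasDerivAt_id γ).mul_const ξ)
      simpa [Function.comp_def] using this
    exact d1.sub d2
  apply antitoneOn_of_deriv_nonpos (convex_Icc 0 1)
  · fun_prop
  · rw [interior_Icc]
    intro γ hγ
    exact (deriv_setup γ hγ).differentiableAt.differentiableWithinAt
  · intro γ hγ
    rw [interior_Icc] at hγ
    rw [(deriv_setup γ hγ).deriv]
    obtain ⟨hγ0, hγ1⟩ := hγ
    set a : ℝ := (1 - γ) * ξ with ha
    set b : ℝ := γ * ξ with hb
    have ha0 : 0 < a := mul_pos (by linarith) h0
    have hb0 : 0 < b := mul_pos hγ0 h0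
    have ha1 : a < 1 := by nlinarith
    have hb1 : b < 1 := by nlinarith
    have hlog : Real.log a + Real.log b ≤ Real.log (1 - a) + Real.log (1 - b) := by
      rw [← Real.log_mul ha0.ne' hb0.ne', ← Real.log_mul (by linarith) (by linarith)]
      apply Real.log_le_log (by positivity)
      nlinarith
    nlinarith

/-- For `0 ≤ γ₁ ≤ γ₂ ≤ 1` and `ξ ∈ [0,1]`,
`H₂((1-γ₂)ξ) - H₂(γ₂ξ) ≤ H₂((1-γ₁)ξ) - H₂(γ₁ξ)`: for fixed `ξ` the coherent-information
integrand of the amplitude damping channel is nonincreasing in the damping parameter `γ`. -/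
theorem ad_coherent_info_antitone_in_gamma (γ₁ γ₂ ξ : ℝ)
    (h0 : 0 ≤ γ₁) (h12 : γ₁ ≤ γ₂) (h1 : γ₂ ≤ 1) (hξ : ξ ∈ Set.Icc (0 : ℝ) 1) :
    binEnt ((1 - γ₂) * ξ) - binEnt (γ₂ * ξ) ≤ binEnt ((1 - γ₁) * ξ) - binEnt (γ₁ * ξ) := by
  obtain ⟨hξ0, hξ1⟩ := hξ
  have h := key_antitone ξ hξ0 hξ1 ⟨h0, h12.trans h1⟩ ⟨h0.trans h12, h1⟩ h12
  simp only [binEnt_eq, div_sub_div_same]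
  have h2 : (0:ℝ) < Real.log 2 := Real.log_pos (by norm_num)
  gcongr
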